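/- Let d : ℝ → ℝ satisfy the Leibniz rule d(xy) = x·d(y) + y·d(x) for all x, y ∈ ℝ, let 0 ≤ q < p be constants, and let f : ℝ \ (pℤ + q) → ℝ be a differentiable function which is p-antiperiodic, i.e., f(x + p) = −f(x) for all x ∈ ℝ \ (pℤ + q), and such that f'(x) ≠ 0 for all x ∈ ℝ \ (pℤ + q). If d(f(x)) = f'(x)·d(x) holds for all x ∈ ℝ \ (pℤ + q), then d is additive, and hence d is a standard derivation. -/

import Mathlib

/-- If `d : ℝ → ℝ` satisfies the Leibniz rule, `0 ≤ q < p`, `f` is a differentiable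
`p`-antiperiodic function on `ℝ \ (pℤ + q)` with nonvanishing derivative, and `d` is a
derivation with respect to `f`, then `d` is additive, hence a standard derivation. -/
theorem additive_of_leibniz_of_antiperiodic
    (d : ℝ → ℝ) (hleib : ∀ x y : ℝ, d (x * y) = x * d y + y * d x)
    (p q : ℝ) (hq : 0 ≤ q) (hqp : q < p)
    (f : ℝ → ℝ)
    (hf : ∀ x : ℝ, (¬ ∃ k : ℤ, x = p * k + q) → DifferentiableAt ℝ f x)
    (hper : ∀ x : ℝ, (¬ ∃ k : ℤ, x = p * k + q) → f (x + p) = -f x)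
    (hf' : ∀ x : ℝ, (¬ ∃ k : ℤ, x = p * k + q) → deriv f x ≠ 0)
    (hdf : ∀ x : ℝ, (¬ ∃ k : ℤ, x = p * k + q) → d (f x) = deriv f x * d x) :
    ∀ x y : ℝ, d (x + y) = d x + d y := by
  have hp : 0 < p := lt_of_le_of_lt hq hqp
  have hp0 : p ≠ 0 := ne_of_gt hp
  -- basic values of d
  have d0 : d 0 = 0 := by have := hleib 0 0; simpa using this
  have d1 : d 1 = 0 := by have := hleib 1 1; simp at this; linarith
  have dneg1 : d (-1) = 0 := by
    have := hleib (-1) (-1); simp [d1] at this; linarith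
  have dneg : ∀ x : ℝ, d (-x) = -d x := by
    intro x
    have := hleib (-1) x
    simp [dneg1] at this
    linarith [this]
  -- notation for the bad set
  set S : Set ℝ := {x : ℝ | ∃ k : ℤ, x = p * k + q} with hS
  -- S is closed
  have hSclosed : IsClosed S := by
    have : S = (fun x : ℝ => (x - q) / p) ⁻¹' (Set.range ((↑) : ℤ → ℝ)) := by
      ext x
      constructor
      · rintro ⟨k, rfl⟩; exact ⟨k, by field_simp; ring⟩
      · rintro ⟨k, hk⟩
        refine ⟨k, ?_⟩
        have : x - q = p * k := by
          field_simp at hk; linarith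
        linarith
    rw [this]
    exact Int.isClosedEmbedding_coe_real.isClosed_range.preimage (by fun_prop)
  -- S is invariant under +p
  have hSshift : ∀ x : ℝ, x ∉ S → x + p ∉ S := by
    rintro x hx ⟨k, hk⟩
    exact hx ⟨k - 1, by push_cast; linarith⟩
  -- derivative antiperiodicity
  have hderiv : ∀ x : ℝ, x ∉ S → deriv f (x + p) = -deriv f x := by
    intro x hx
    have hev : ∀ᶠ y in nhds x, y ∉ S := hSclosed.isOpen_compl.eventually_mem hx
    have h1 : (fun y => f (y + p)) =ᶠ[nhds x] (fun y => -f y) :=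
      hev.mono fun y hy => hper y hy
    calc deriv f (x + p) = deriv (fun y => f (y + p)) x := (deriv_comp_add_const f p x).symm
      _ = deriv (fun y => -f y) x := h1.deriv_eq
      _ = -deriv f x := deriv.neg
  -- d is p-periodic off S
  have dper : ∀ x : ℝ, x ∉ S → d (x + p) = d x := by
    intro x hx
    have hxp : x + p ∉ S := hSshift x hx
    have h1 : d (f (x + p)) = deriv f (x + p) * d (x + p) := hdf _ hxp
    rw [hper x hx, dneg, hdf x hx, hderiv x hx] at h1
    have := hf' x hx
    have h2 : deriv f x * d (x + p) = deriv f x * d x := by linarith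
    exact mul_left_cancel₀ this h2
  -- key Leibniz identity
  have key : ∀ x : ℝ, x ∉ S → ∀ y : ℝ, d (x * y + p * y) = d (x * y) + p * d y := by
    intro x hx y
    have h1 : d ((x + p) * y) = (x + p) * d y + y * d (x + p) := hleib _ _
    rw [dper x hx] at h1
    have h2 : d (x * y) = x * d y + y * d x := hleib _ _
    have h3 : (x + p) * y = x * y + p * y := by ring
    rw [h3] at h1
    linarith
  -- lemma A': additivity up to a d p term
  have keyA : ∀ u v : ℝ, v ≠ 0 → (u * p / v) ∉ S →
      d (u + v) = d u + d v - (v / p) * d p := by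
    intro u v hv hx
    have h1 := key (u * p / v) hx (v / p)
    have e1 : u * p / v * (v / p) = u := by field_simp
    have e2 : p * (v / p) = v := by field_simp
    rw [e1, e2] at h1
    have h2 : d (p * (v / p)) = p * d (v / p) + (v / p) * d p := hleib _ _
    rw [e2] at h2
    linarith
  -- d p = 0
  have dp : d p = 0 := by
    set T : Set ℝ := (Set.range fun k : ℤ => (k : ℝ) + q / p) ∪
        (Set.range fun k : ℤ => p / (p * k + q)) ∪ {0, 1} with hT
    have hTc : T.Countable := by
      apply Set.Countable.union
      apply Set.Countable.union
      · exact Set.countable_range _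
      · exact Set.countable_range _
      · exact (Set.countable_singleton _).insert _
    obtain ⟨t, ht⟩ : ∃ t : ℝ, t ∉ T := by
      by_contra h
      push_neg at h
      exact Cardinal.not_countable_real (hTc.mono fun x _ => h x)
    have ht0 : t ≠ 0 := fun h => ht (Or.inr (Or.inl h))
    have ht1 : t ≠ 1 := fun h => ht (Or.inr (Or.inr h))
    have htp : t * p ∉ S := by
      rintro ⟨k, hk⟩
      exact ht (Or.inl (Or.inl ⟨k, by field_simp; linarith⟩))
    have hpt : p / t ∉ S := by
      rintro ⟨k, hk⟩
      have hpk : p * k + q ≠ 0 := by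
        intro h0
        rw [h0] at hk
        rw [div_eq_zero_iff] at hk
        tauto
      refine ht (Or.inl (Or.inr ⟨k, ?_⟩))
      field_simp
      field_simp at hk
      linarith
    have h1 : d (t * p + p) = d (t * p) + d p - (p / p) * d p := by
      apply keyA
      · exact hp0
      · have : t * p * p / p = t * p := by field_simp
        rw [this]; exact htp
    have h2 : d (p + t * p) = d p + d (t * p) - (t * p / p) * d p := by
      apply keyA
      · exact mul_ne_zero ht0 hp0
      · have : p * p / (t * p) = p / t := by field_simp
        rw [this]; exact hpt
    rw [div_self hp0] at h1
    have e3 : t * p / p = t := by field_simp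
    rw [e3] at h2
    have e4 : t * p + p = p + t * p := by ring
    rw [e4] at h1
    have : (1 - t) * d p = 0 := by linarith
    rcases mul_eq_zero.1 this with h | h
    · exact absurd (by linarith : t = 1) ht1
    · exact h
  -- clean additivity lemma
  have keyB : ∀ u v : ℝ, v ≠ 0 → (u * p / v) ∉ S → d (u + v) = d u + d v := by
    intro u v hv hx
    have := keyA u v hv hx
    rw [dp] at this
    linarith
  -- final argument
  intro u v
  by_cases hu : u = 0
  · subst hu; simp [d0]
  by_cases hv : v = 0
  · subst hv; simp [d0]
  by_cases huv : u + v = 0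
  · have hv' : v = -u := by linarith
    subst hv'
    rw [add_neg_cancel, d0, dneg]
    ring
  -- generic case: pick a good auxiliary w
  set B : Set ℝ := (Set.range fun k : ℤ => ((p * k + q) * v - u * p) / (p + (p * k + q))) ∪
      (Set.range fun k : ℤ => u * p / (p * k + q)) ∪
      (Set.range fun k : ℤ => v * p / (p + (p * k + q))) ∪ {0, v} with hB
  have hBc : B.Countable := by
    apply Set.Countable.union
    apply Set.Countable.union
    apply Set.Countable.union
    · exact Set.countable_range _
    · exact Set.countable_range _
    · exact Set.countable_range _
    · exact (Set.countable_singleton _).insert _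
  obtain ⟨w, hw⟩ : ∃ w : ℝ, w ∉ B := by
    by_contra h
    push_neg at h
    exact Cardinal.not_countable_real (hBc.mono fun x _ => h x)
  have hw0 : w ≠ 0 := fun h => hw (Or.inr (Or.inl h))
  have hwv : w ≠ v := fun h => hw (Or.inr (Or.inr h))
  have hvw : v - w ≠ 0 := fun h => hwv (by linarith)
  have c1 : ((u + w) * p / (v - w)) ∉ S := by
    rintro ⟨k, hk⟩
    have hk' : (u + w) * p = (p * k + q) * (v - w) := by
      field_simp at hk; linarith
    by_cases hdeg : p + (p * k + q) = 0
    · have hq' : p * k + q = -p := by linarith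
      rw [hq'] at hk'
      have : u + v = 0 := by
        have := hp0
        nlinarith [hk']
      exact huv this
    · refine hw (Or.inl (Or.inl (Or.inl ⟨k, ?_⟩)))
      field_simp
      nlinarith [hk']
  have c2 : (u * p / w) ∉ S := by
    rintro ⟨k, hk⟩
    have hk' : u * p = (p * k + q) * w := by field_simp at hk; linarith
    by_cases hdeg : p * k + q = 0
    · rw [hdeg] at hk'
      simp at hk'
      rcases hk' with h | h
      · exact hu h
      · exact hp0 h
    · refine hw (Or.inl (Or.inl (Or.inr ⟨k, ?_⟩)))
      field_simp
      linarith [hk']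
  have c3 : ((v - w) * p / w) ∉ S := by
    rintro ⟨k, hk⟩
    have hk' : (v - w) * p = (p * k + q) * w := by field_simp at hk; linarith
    by_cases hdeg : p + (p * k + q) = 0
    · have hq' : p * k + q = -p := by linarith
      rw [hq'] at hk'
      have : v * p = 0 := by nlinarith [hk']
      rcases mul_eq_zero.1 this with h | h
      · exact hv h
      · exact hp0 h
    · refine hw (Or.inl (Or.inr ⟨k, ?_⟩))
      field_simp
      nlinarith [hk']
  have e1 : d (u + v) = d (u + w) + d (v - w) := by
    have := keyB (u + w) (v - w) hvw c1
    have e : u + w + (v - w) = u + v := by ring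
    rw [e] at this
    exact this
  have e2 : d (u + w) = d u + d w := keyB u w hw0 c2
  have e3 : d v = d (v - w) + d w := by
    have := keyB (v - w) w hw0 c3
    have e : v - w + w = v := by ring
    rw [e] at this
    exact this
  linarith
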